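/- arXiv:2006.04933 — 2 statements merged into one kernel-verified Lean document; each statement's English description precedes it below -/
import Mathlib

section
/- Let S be a nonempty finite set, let y : S → ℝ with 0 ≤ y_e ≤ 1 for all e, let g(F) = ∑_{e∈F} (1 − y_e) + ∑_{e∈S∖F} y_e, and let F₀ = {e ∈ S : y_e > 1/2}. Then the minimum of g(F) over all subsets F ⊆ S with |F| odd equals ∑_{e∈S} min(y_e, 1 − y_e) if |F₀| is odd, and equals ∑_{e∈S} min(y_e, 1 − y_e) + min_{e∈S} |1 − 2y_e| if |F₀| is even. -/
/-- For a nonempty finite `S` and `y : S → [0,1]`, the minimum of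
`g F = ∑ e in F, (1 - y e) + ∑ e in S \ F, y e` over all odd-cardinality `F ⊆ S`
equals `∑ e in S, min (y e) (1 - y e)` if `F₀ = {e ∈ S : y e > 1/2}` has odd
cardinality, and equals `∑ e in S, min (y e) (1 - y e) + min_{e ∈ S} |1 - 2 y e|`
if `F₀` has even cardinality. -/
theorem parity_lhs_min_over_odd_subsets {α : Type*} [DecidableEq α]
    (S : Finset α) (hS : S.Nonempty) (y : α → ℝ)
    (hy : ∀ e ∈ S, 0 ≤ y e ∧ y e ≤ 1)
    (g : Finset α → ℝ)
    (hg : ∀ F, g F = ∑ e ∈ F, (1 - y e) + ∑ e ∈ S \ F, y e)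
    (F₀ : Finset α) (hF₀ : F₀ = S.filter (fun e => 1 / 2 < y e)) :
    IsLeast {x : ℝ | ∃ F ⊆ S, Odd F.card ∧ g F = x}
      (if Odd F₀.card then ∑ e ∈ S, min (y e) (1 - y e)
       else ∑ e ∈ S, min (y e) (1 - y e) + S.inf' hS (fun e => |1 - 2 * y e|)) := by
  classical
  set m : α → ℝ := fun e => min (y e) (1 - y e) with hm
  have hF₀S : F₀ ⊆ S := by rw [hF₀]; exact Finset.filter_subset _ _
  have hmemF₀ : ∀ e ∈ S, (e ∈ F₀ ↔ 1 / 2 < y e) := by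
    intro e he; rw [hF₀, Finset.mem_filter]; simp [he]
  -- key: g F as one sum over S
  have key : ∀ F, F ⊆ S → g F = ∑ e ∈ S, (if e ∈ F then 1 - y e else y e) := by
    intro F hFS
    rw [hg]
    have hU : S = F ∪ (S \ F) := (Finset.union_sdiff_of_subset hFS).symm
    conv_rhs => rw [hU]
    rw [Finset.sum_union Finset.disjoint_sdiff]
    congr 1
    · exact Finset.sum_congr rfl (fun e he => by rw [if_pos he])
    · exact Finset.sum_congr rfl (fun e he => by
        rw [if_neg (Finset.mem_sdiff.mp he).2])
  -- termwise: m e equals the F₀-choice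
  have hmeq : ∀ e ∈ S, m e = (if e ∈ F₀ then 1 - y e else y e) := by
    intro e he
    by_cases h : e ∈ F₀
    · have hy2 : 1 / 2 < y e := (hmemF₀ e he).mp h
      rw [if_pos h, hm]
      exact min_eq_right (by linarith)
    · have hy2 : ¬ (1 / 2 < y e) := fun hc => h ((hmemF₀ e he).mpr hc)
      push_neg at hy2
      rw [if_neg h, hm]
      exact min_eq_left (by linarith)
  -- flipping a single element costs |1 - 2 y e|
  have hflip : ∀ e ∈ S, ∀ F : Finset α, ((e ∈ F) ↔ ¬ (e ∈ F₀)) →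
      (if e ∈ F then 1 - y e else y e) = m e + |1 - 2 * y e| := by
    intro e he F hiff
    by_cases h : e ∈ F₀
    · have hy2 : 1 / 2 < y e := (hmemF₀ e he).mp h
      have hnF : e ∉ F := fun hc => (hiff.mp hc) h
      rw [if_neg hnF, hmeq e he, if_pos h, abs_of_nonpos (by linarith)]
      ring
    · have hy2 : ¬ (1 / 2 < y e) := fun hc => h ((hmemF₀ e he).mpr hc)
      push_neg at hy2
      have hF : e ∈ F := hiff.mpr h
      rw [if_pos hF, hmeq e he, if_neg h, abs_of_nonneg (by linarith)]
      ring
  -- termwise lower bound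
  have hterm_ge : ∀ F : Finset α, ∀ e ∈ S, m e ≤ (if e ∈ F then 1 - y e else y e) := by
    intro F e _
    by_cases h : e ∈ F
    · rw [if_pos h]; exact min_le_right _ _
    · rw [if_neg h]; exact min_le_left _ _
  constructor
  · -- membership
    by_cases hpar : Odd F₀.card
    · rw [if_pos hpar]
      refine ⟨F₀, hF₀S, hpar, ?_⟩
      rw [key F₀ hF₀S]
      exact Finset.sum_congr rfl (fun e he => (hmeq e he).symm)
    · rw [if_neg hpar]
      obtain ⟨e₀, he₀S, he₀⟩ := Finset.exists_mem_eq_inf' hS (fun e => |1 - 2 * y e|)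
      set F : Finset α := if e₀ ∈ F₀ then F₀.erase e₀ else insert e₀ F₀ with hFdef
      have hFS : F ⊆ S := by
        rw [hFdef]
        split_ifs
        · exact (Finset.erase_subset _ _).trans hF₀S
        · exact Finset.insert_subset he₀S hF₀S
      have hodd : Odd F.card := by
        rw [Nat.not_odd_iff_even] at hpar
        rw [hFdef]
        split_ifs with h
        · rw [Finset.card_erase_of_mem h]
          exact Nat.Even.sub_odd (Nat.one_le_iff_ne_zero.mpr
            (Finset.card_ne_zero_of_mem h)) hpar (odd_one)
        · rw [Finset.card_insert_of_notMem h]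
          exact Even.add_one hpar
      refine ⟨F, hFS, hodd, ?_⟩
      rw [key F hFS]
      have hsplit : ∀ e ∈ S, (if e ∈ F then 1 - y e else y e)
          = m e + (if e = e₀ then |1 - 2 * y e| else 0) := by
        intro e he
        by_cases hee : e = e₀
        · subst hee
          rw [if_pos rfl]
          refine hflip e he F ?_
          rw [hFdef]
          split_ifs with h
          · simp [h]
          · simp [h]
        · rw [if_neg hee]
          have : (e ∈ F) ↔ (e ∈ F₀) := by
            rw [hFdef]
            split_ifs with h
            · simp [Finset.mem_erase, hee]
            · simp [Finset.mem_insert, hee]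
          rw [hmeq e he, add_zero]
          by_cases h : e ∈ F₀
          · rw [if_pos (this.mpr h), if_pos h]
          · rw [if_neg (fun hc => h (this.mp hc)), if_neg h]
      rw [Finset.sum_congr rfl hsplit, Finset.sum_add_distrib]
      congr 1
      rw [Finset.sum_ite_eq' S e₀ (fun e => |1 - 2 * y e|), if_pos he₀S, he₀]
  · -- lower bound
    rintro x ⟨F, hFS, hodd, rfl⟩
    by_cases hpar : Odd F₀.card
    · rw [if_pos hpar, key F hFS]
      exact Finset.sum_le_sum (hterm_ge F)
    · rw [if_neg hpar, key F hFS]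
      -- F ≠ F₀, so some element differs
      have hne : F ≠ F₀ := by
        intro h; rw [h] at hodd; exact hpar hodd
      have hex : ∃ e, ¬ ((e ∈ F) ↔ (e ∈ F₀)) := by
        by_contra hc
        push_neg at hc
        exact hne (Finset.ext hc)
      obtain ⟨e, he⟩ := hex
      have hiff : (e ∈ F) ↔ ¬ (e ∈ F₀) := by tauto
      have heS : e ∈ S := by
        by_cases h : e ∈ F
        · exact hFS h
        · exact hF₀S (not_not.mp (fun hc => h (hiff.mpr hc)))
      have h1 : (if e ∈ F then 1 - y e else y e) = m e + |1 - 2 * y e| :=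
        hflip e heS F hiff
      have h2 : S.inf' hS (fun e => |1 - 2 * y e|) ≤ |1 - 2 * y e| :=
        Finset.inf'_le _ heS
      rw [← Finset.sum_erase_add S (fun e' => if e' ∈ F then 1 - y e' else y e') heS,
        ← Finset.sum_erase_add S m heS]
      have h3 : ∑ e' ∈ S.erase e, m e' ≤
          ∑ e' ∈ S.erase e, (if e' ∈ F then 1 - y e' else y e') :=
        Finset.sum_le_sum (fun e' he' => hterm_ge F e' (Finset.mem_of_mem_erase he'))
      rw [h1]
      linarith
end

section
/- Let G = (V, E) be a finite connected graph with |V| ≥ 3, let x : E → ℕ be a GTSP tour on G, i.e., for every vertex v the degree ∑_{e∈δ(v)} x_e is even and positive, and the subgraph of edges with x_e > 0 is connected and spans V. Assume moreover x_e ≤ 2 for all e ∈ E. For an edge e = {i,j}, set z_e = 1 if x_e = 2 and z_e = 0 otherwise. Then ∑_{e'∈δ(i)} x_{e'} + ∑_{e'∈δ(j)} x_{e'} − 2 z_e ≥ 4. -/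
/-- A GTSP tour on a finite graph `G`: a natural-number edge-multiplicity vector,
supported on the edges of `G`, with even positive degree at every vertex, whose
support is connected and spans all the vertices. -/
def IsGTSPTour {V : Type*} [Fintype V] [DecidableEq V]
    (G : SimpleGraph V) [DecidableRel G.Adj] (x : Sym2 V → ℕ) : Prop :=
  (∀ e, e ∉ G.edgeSet → x e = 0) ∧
    (∀ v : V, Even (∑ e ∈ G.incidenceFinset v, x e) ∧
      0 < ∑ e ∈ G.incidenceFinset v, x e) ∧
    (SimpleGraph.fromEdgeSet {e : Sym2 V | e ∈ G.edgeSet ∧ 0 < x e}).Connected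

/-- validity of inequality (5): for a GTSP tour `x` with `x e ≤ 2` on a
connected graph with at least 3 vertices, and an edge `e = {i,j}` with
`z_e = [x e = 2]`, we have `x(δ(i)) + x(δ(j)) - 2 z_e ≥ 4`. -/
theorem half_z_path_inequality_valid {V : Type*} [Fintype V] [DecidableEq V]
    (G : SimpleGraph V) [DecidableRel G.Adj] (hG : G.Connected)
    (hV : 3 ≤ Fintype.card V)
    (x : Sym2 V → ℕ) (hx : IsGTSPTour G x) (hx2 : ∀ e, x e ≤ 2)
    (i j : V) (hij : G.Adj i j)
    (z : ℤ) (hz : z = if x s(i, j) = 2 then 1 else 0) :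
    (4 : ℤ) ≤ (∑ e ∈ G.incidenceFinset i, (x e : ℤ)) +
        (∑ e ∈ G.incidenceFinset j, (x e : ℤ)) - 2 * z := by
  obtain ⟨hsupp, hdeg, hconn⟩ := hx
  obtain ⟨hievn, hipos⟩ := hdeg i
  obtain ⟨hjevn, hjpos⟩ := hdeg j
  obtain ⟨a, ha⟩ := hievn
  obtain ⟨b, hb⟩ := hjevn
  have hcasti : (∑ e ∈ G.incidenceFinset i, (x e : ℤ)) =
      ((∑ e ∈ G.incidenceFinset i, x e : ℕ) : ℤ) := by push_cast; ring
  have hcastj : (∑ e ∈ G.incidenceFinset j, (x e : ℤ)) =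
      ((∑ e ∈ G.incidenceFinset j, x e : ℕ) : ℤ) := by push_cast; ring
  rw [hcasti, hcastj]
  subst hz
  split_ifs with h
  · -- x s(i,j) = 2; show sum ≥ 6
    have key : 6 ≤ (∑ e ∈ G.incidenceFinset i, x e) + ∑ e ∈ G.incidenceFinset j, x e := by
      by_contra hlt
      push_neg at hlt
      have hi2 : ∑ e ∈ G.incidenceFinset i, x e = 2 := by omega
      have hj2 : ∑ e ∈ G.incidenceFinset j, x e = 2 := by omega
      have hmemi : s(i, j) ∈ G.incidenceFinset i := by
        rw [SimpleGraph.mem_incidenceFinset]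
        exact ⟨hij, Sym2.mem_mk_left i j⟩
      have hmemj : s(i, j) ∈ G.incidenceFinset j := by
        rw [SimpleGraph.mem_incidenceFinset]
        exact ⟨hij, Sym2.mem_mk_right i j⟩
      have hi0 : ∀ e ∈ (G.incidenceFinset i).erase s(i, j), x e = 0 := by
        have := Finset.add_sum_erase _ x hmemi
        rw [hi2] at this
        intro e he
        have hz : ∑ e ∈ (G.incidenceFinset i).erase s(i, j), x e = 0 := by omega
        exact Finset.sum_eq_zero_iff.mp hz e he
      have hj0 : ∀ e ∈ (G.incidenceFinset j).erase s(i, j), x e = 0 := by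
        have := Finset.add_sum_erase _ x hmemj
        rw [hj2] at this
        intro e he
        have hz : ∑ e ∈ (G.incidenceFinset j).erase s(i, j), x e = 0 := by omega
        exact Finset.sum_eq_zero_iff.mp hz e he
      set H := SimpleGraph.fromEdgeSet {e : Sym2 V | e ∈ G.edgeSet ∧ 0 < x e} with hH
      have hnb : ∀ u v : V, H.Adj u v → (u = i ∨ u = j) → (v = i ∨ v = j) := by
        intro u v huv hu
        rw [hH, SimpleGraph.fromEdgeSet_adj] at huv
        obtain ⟨⟨hE, hpos⟩, hne⟩ := huv
        rcases hu with rfl | rfl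
        · by_contra hv
          push_neg at hv
          have hmem : s(u, v) ∈ (G.incidenceFinset u).erase s(u, j) := by
            refine Finset.mem_erase.mpr ⟨?_, ?_⟩
            · intro hq
              exact hv.2 (Sym2.congr_right.mp hq)
            · rw [SimpleGraph.mem_incidenceFinset]
              exact ⟨hE, Sym2.mem_mk_left u v⟩
          exact absurd (hi0 _ hmem) (by omega)
        · by_contra hv
          push_neg at hv
          have hmem : s(u, v) ∈ (G.incidenceFinset u).erase s(i, u) := by
            refine Finset.mem_erase.mpr ⟨?_, ?_⟩
            · intro hq
              rw [Sym2.eq_iff] at hq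
              rcases hq with ⟨-, hvu⟩ | ⟨-, hvi⟩
              · exact hv.2 hvu
              · exact hv.1 hvi
            · rw [SimpleGraph.mem_incidenceFinset]
              exact ⟨hE, Sym2.mem_mk_left u v⟩
          exact absurd (hj0 _ hmem) (by omega)
      have hwalk : ∀ {u v : V} (_ : H.Walk u v), (u = i ∨ u = j) → (v = i ∨ v = j) := by
        intro u v w
        induction w with
        | nil => exact id
        | cons h p ih => exact fun hu => ih (hnb _ _ h hu)
      have hex : ∃ k : V, k ≠ i ∧ k ≠ j := by
        by_contra hno
        push_neg at hno
        have hsub : (Finset.univ : Finset V) ⊆ {i, j} := by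
          intro k _
          simp only [Finset.mem_insert, Finset.mem_singleton]
          rcases eq_or_ne k i with rfl | hk
          · exact Or.inl rfl
          · exact Or.inr (hno k hk)
        have hle := Finset.card_le_card hsub
        rw [Finset.card_univ] at hle
        have h2 : ({i, j} : Finset V).card ≤ 2 := Finset.card_insert_le _ _ |>.trans (by simp)
        omega
      obtain ⟨k, hk1, hk2⟩ := hex
      obtain ⟨w⟩ := hconn.preconnected i k
      rcases hwalk w (Or.inl rfl) with rfl | rfl
      · exact hk1 rfl
      · exact hk2 rfl
    omega
  · omega
end
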